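/- Let η₁,…,ηₙ be real numbers with η₁+⋯+ηₙ = 0 and η₁²+⋯+ηₙ² = 1, and let r_{ij} ≥ 0 for 1 ≤ i < j ≤ n. Then ∑_{i<j} (η_i − η_j)² r_{ij} ≤ ∑_{i<j} r_{ij} + max_{i<j} r_{ij}. -/
import Mathlib

lemma star_aux (n : ℕ) (η : Fin n → ℝ) (hsq : ∑ i, (η i) ^ 2 = 1)
    (v : Fin n) (T : Finset (Fin n)) (hv : v ∉ T) :
    ∑ j ∈ T, ((η v - η j) ^ 2 - 1) ≤ 1 := by
  set a := η v with ha
  set t := (T.card : ℝ) with htc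
  set B := ∑ j ∈ T, η j with hB
  set Q := ∑ j ∈ T, (η j) ^ 2 with hQ
  have ht0 : 0 ≤ t := by positivity
  have hQ0 : 0 ≤ Q := Finset.sum_nonneg fun j _ => sq_nonneg _
  have hQ1 : a ^ 2 + Q ≤ 1 := by
    have h := Finset.sum_le_sum_of_subset_of_nonneg (Finset.subset_univ (insert v T))
      (fun i _ _ => sq_nonneg (η i))
    rw [Finset.sum_insert hv, hsq] at h
    exact h
  have hCS : B ^ 2 ≤ t * Q := by
    have := Finset.sum_mul_sq_le_sq_mul_sq T (fun _ => (1:ℝ)) η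
    simpa [hB, hQ, htc] using this
  have hexp : ∑ j ∈ T, ((a - η j) ^ 2 - 1) = t * a ^ 2 - 2 * a * B + Q - t := by
    have : ∀ j ∈ T, (a - η j) ^ 2 - 1 = a ^ 2 - 2 * a * η j + (η j) ^ 2 - 1 := by
      intro j _; ring
    rw [Finset.sum_congr rfl this]
    simp only [Finset.sum_sub_distrib, Finset.sum_add_distrib, Finset.sum_const,
      ← Finset.mul_sum, nsmul_eq_mul]
    ring
  rw [hexp]
  nlinarith [sq_nonneg (a + B), mul_nonneg ht0 (by linarith : (0:ℝ) ≤ 1 - a ^ 2 - Q)]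

set_option maxHeartbeats 1000000 in
theorem stmt_0 (n : ℕ) (hn : 2 ≤ n) (η : Fin n → ℝ)
    (hsum : ∑ i, η i = 0) (hsq : ∑ i, (η i) ^ 2 = 1)
    (r : Fin n → Fin n → ℝ) (hr : ∀ i j : Fin n, i < j → 0 ≤ r i j) :
    ∑ p ∈ Finset.univ.filter (fun p : Fin n × Fin n => p.1 < p.2),
        (η p.1 - η p.2) ^ 2 * r p.1 p.2 ≤
      (∑ p ∈ Finset.univ.filter (fun p : Fin n × Fin n => p.1 < p.2), r p.1 p.2) +
        sSup {x : ℝ | ∃ i j : Fin n, i < j ∧ x = r i j} := by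
  classical
  set P := Finset.univ.filter (fun p : Fin n × Fin n => p.1 < p.2) with hP
  set M := sSup {x : ℝ | ∃ i j : Fin n, i < j ∧ x = r i j} with hM
  -- the set is the image of a finite set
  have hset : {x : ℝ | ∃ i j : Fin n, i < j ∧ x = r i j}
      = (fun p : Fin n × Fin n => r p.1 p.2) '' ↑P := by
    ext x
    simp only [Set.mem_setOf_eq, Set.mem_image, Finset.coe_filter, Finset.mem_univ,
      true_and, Set.mem_setOf_eq, hP, Prod.exists]
    constructor
    · rintro ⟨i, j, hij, rfl⟩; exact ⟨i, j, hij, rfl⟩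
    · rintro ⟨i, j, hij, rfl⟩; exact ⟨i, j, hij, rfl⟩
  have hbdd : BddAbove {x : ℝ | ∃ i j : Fin n, i < j ∧ x = r i j} := by
    rw [hset]; exact (P.finite_toSet.image _).bddAbove
  have hle : ∀ i j : Fin n, i < j → r i j ≤ M :=
    fun i j hij => le_csSup hbdd ⟨i, j, hij, rfl⟩
  have h01 : (⟨0, by omega⟩ : Fin n) < ⟨1, by omega⟩ := by
    simp [Fin.lt_def]
  have hM0 : 0 ≤ M := le_trans (hr _ _ h01) (hle _ _ h01)
  -- key lemma
  set S := P.filter (fun p => 1 < (η p.1 - η p.2) ^ 2) with hS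
  have hSP : ∀ p ∈ S, p.1 < p.2 ∧ 1 < (η p.1 - η p.2) ^ 2 := by
    intro p hp
    simp only [hS, hP, Finset.mem_filter, Finset.mem_univ, true_and] at hp
    exact hp
  -- any two pairs in S intersect
  have hsub4 : ∀ s : Finset (Fin n), ∑ i ∈ s, (η i) ^ 2 ≤ 1 := by
    intro s
    have h := Finset.sum_le_sum_of_subset_of_nonneg (Finset.subset_univ s)
      (fun i _ _ => sq_nonneg (η i))
    rwa [hsq] at h
  have hdisj : ∀ p ∈ S, ∀ q ∈ S, p.1 ≠ q.1 → p.1 ≠ q.2 → p.2 ≠ q.1 → p.2 ≠ q.2 → False := by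
    intro p hp q hq h1 h2 h3 h4
    obtain ⟨hplt, hpc⟩ := hSP p hp
    obtain ⟨hqlt, hqc⟩ := hSP q hq
    have hpne : p.1 ≠ p.2 := ne_of_lt hplt
    have hqne : q.1 ≠ q.2 := ne_of_lt hqlt
    have h := hsub4 {p.1, p.2, q.1, q.2}
    rw [Finset.sum_insert (by simp [hpne, h1, h2]),
      Finset.sum_insert (by simp [h3, h4]),
      Finset.sum_insert (by simp [hqne]), Finset.sum_singleton] at h
    nlinarith [sq_nonneg (η p.1 + η p.2), sq_nonneg (η q.1 + η q.2)]
  have htri : ∀ i j k : Fin n, i ≠ j → i ≠ k → j ≠ k →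
      1 < (η i - η j) ^ 2 → 1 < (η j - η k) ^ 2 → 1 < (η i - η k) ^ 2 → False := by
    intro i j k hij hik hjk c1 c2 c3
    have h := hsub4 {i, j, k}
    rw [Finset.sum_insert (by simp [hij, hik]),
      Finset.sum_insert (by simp [hjk]), Finset.sum_singleton] at h
    nlinarith [sq_nonneg (η i + η j + η k)]
  have hpair : ∀ p ∈ S, ∀ x y : Fin n, (p.1 = x ∨ p.2 = x) → (p.1 = y ∨ p.2 = y) →
      x ≠ y → 1 < (η x - η y) ^ 2 := by
    intro p hp x y hx hy hxy
    obtain ⟨hplt, hpc⟩ := hSP p hp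
    rcases hx with hx | hx <;> rcases hy with hy | hy <;> subst hx <;> subst hy
    · exact absurd rfl hxy
    · exact hpc
    · nlinarith
    · exact absurd rfl hxy
  have key : ∑ p ∈ S, ((η p.1 - η p.2) ^ 2 - 1) ≤ 1 := by
    rcases S.eq_empty_or_nonempty with hSe | ⟨p₀, hp₀⟩
    · simp [hSe]
    · obtain ⟨v, hv⟩ : ∃ v : Fin n, ∀ p ∈ S, p.1 = v ∨ p.2 = v := by
        by_cases h1 : ∀ p ∈ S, p.1 = p₀.1 ∨ p.2 = p₀.1
        · exact ⟨p₀.1, h1⟩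
        push_neg at h1
        obtain ⟨q₁, hq₁S, hq₁a, hq₁b⟩ := h1
        by_cases h2 : ∀ p ∈ S, p.1 = p₀.2 ∨ p.2 = p₀.2
        · exact ⟨p₀.2, h2⟩
        push_neg at h2
        obtain ⟨q₂, hq₂S, hq₂a, hq₂b⟩ := h2
        exfalso
        have hA : q₁.1 = p₀.2 ∨ q₁.2 = p₀.2 := by
          by_contra hc; push_neg at hc
          exact hdisj p₀ hp₀ q₁ hq₁S (Ne.symm hq₁a) (Ne.symm hq₁b) hc.1.symm hc.2.symm
        have hB : q₂.1 = p₀.1 ∨ q₂.2 = p₀.1 := by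
          by_contra hc; push_neg at hc
          exact hdisj p₀ hp₀ q₂ hq₂S hc.1.symm hc.2.symm (Ne.symm hq₂a) (Ne.symm hq₂b)
        obtain ⟨k, hk1, hk2⟩ : ∃ k : Fin n, (q₁.1 = k ∨ q₁.2 = k) ∧ (q₂.1 = k ∨ q₂.2 = k) := by
          by_contra hc; push_neg at hc
          refine hdisj q₁ hq₁S q₂ hq₂S ?_ ?_ ?_ ?_
          · exact fun h => (hc q₁.1 (Or.inl rfl)).1 h.symm
          · exact fun h => (hc q₁.1 (Or.inl rfl)).2 h.symm
          · exact fun h => (hc q₁.2 (Or.inr rfl)).1 h.symm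
          · exact fun h => (hc q₁.2 (Or.inr rfl)).2 h.symm
        have hkp1 : k ≠ p₀.1 := by
          rcases hk1 with h | h
          · exact h ▸ hq₁a
          · exact h ▸ hq₁b
        have hkp2 : k ≠ p₀.2 := by
          rcases hk2 with h | h
          · exact h ▸ hq₂a
          · exact h ▸ hq₂b
        have h12 : p₀.1 ≠ p₀.2 := ne_of_lt (hSP p₀ hp₀).1
        exact htri p₀.1 p₀.2 k h12 hkp1.symm hkp2.symm
          (hpair p₀ hp₀ _ _ (Or.inl rfl) (Or.inr rfl) h12)
          (hpair q₁ hq₁S p₀.2 k hA hk1 hkp2.symm)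
          (hpair q₂ hq₂S p₀.1 k hB hk2 hkp1.symm)
      -- now S is a star at v
      set f : Fin n × Fin n → Fin n := fun p => if p.1 = v then p.2 else p.1 with hf
      have hne1 : ∀ p ∈ S, p.2 = v → p.1 ≠ v := by
        intro p hp h hc
        exact absurd ((hc.trans h.symm) ▸ (hSP p hp).1) (lt_irrefl _)
      have hfval : ∀ p ∈ S, (η p.1 - η p.2) ^ 2 - 1 = (η v - η (f p)) ^ 2 - 1 := by
        intro p hp
        rcases hv p hp with h | h
        · have hfp : f p = p.2 := by simp [hf, h]
          rw [hfp, ← h]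
        · have hfp : f p = p.1 := by simp [hf, hne1 p hp h]
          rw [hfp, ← h]; ring
      have hinj : ∀ p ∈ S, ∀ q ∈ S, f p = f q → p = q := by
        intro p hp q hq hfe
        have hplt := (hSP p hp).1
        have hqlt := (hSP q hq).1
        rcases hv p hp with h1 | h1 <;> rcases hv q hq with h2 | h2
        · have e1 : f p = p.2 := by simp [hf, h1]
          have e2 : f q = q.2 := by simp [hf, h2]
          rw [e1, e2] at hfe
          exact Prod.ext (h1.trans h2.symm) hfe
        · have e1 : f p = p.2 := by simp [hf, h1]
          have e2 : f q = q.1 := by simp [hf, hne1 q hq h2]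
          rw [e1, e2] at hfe
          exfalso
          rw [h1] at hplt; rw [h2] at hqlt; rw [hfe] at hplt
          exact absurd (hplt.trans hqlt) (lt_irrefl _)
        · have e1 : f p = p.1 := by simp [hf, hne1 p hp h1]
          have e2 : f q = q.2 := by simp [hf, h2]
          rw [e1, e2] at hfe
          exfalso
          rw [h1] at hplt; rw [h2] at hqlt; rw [← hfe] at hqlt
          exact absurd (hplt.trans hqlt) (lt_irrefl _)
        · have e1 : f p = p.1 := by simp [hf, hne1 p hp h1]
          have e2 : f q = q.1 := by simp [hf, hne1 q hq h2]
          rw [e1, e2] at hfe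
          exact Prod.ext hfe (h1.trans h2.symm)
      have hvT : v ∉ S.image f := by
        intro hmem
        obtain ⟨p, hp, hc⟩ := Finset.mem_image.mp hmem
        rcases hv p hp with h | h
        · have e1 : f p = p.2 := by simp [hf, h]
          rw [e1] at hc
          exact absurd (h ▸ hc ▸ (hSP p hp).1) (lt_irrefl _)
        · have e1 : f p = p.1 := by simp [hf, hne1 p hp h]
          rw [e1] at hc
          exact hne1 p hp h hc
      calc ∑ p ∈ S, ((η p.1 - η p.2) ^ 2 - 1)
          = ∑ p ∈ S, ((η v - η (f p)) ^ 2 - 1) := Finset.sum_congr rfl hfval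
        _ = ∑ j ∈ S.image f, ((η v - η j) ^ 2 - 1) := by
          rw [Finset.sum_image hinj]
        _ ≤ 1 := star_aux n η hsq v (S.image f) hvT
  -- assemble
  have hsplit : ∑ p ∈ P, (η p.1 - η p.2) ^ 2 * r p.1 p.2
      = ∑ p ∈ P, r p.1 p.2 + ∑ p ∈ P, ((η p.1 - η p.2) ^ 2 - 1) * r p.1 p.2 := by
    rw [← Finset.sum_add_distrib]
    exact Finset.sum_congr rfl fun p _ => by ring
  rw [hsplit]
  have hPsplit : ∑ p ∈ P, ((η p.1 - η p.2) ^ 2 - 1) * r p.1 p.2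
      = ∑ p ∈ S, ((η p.1 - η p.2) ^ 2 - 1) * r p.1 p.2
        + ∑ p ∈ P.filter (fun p => ¬ 1 < (η p.1 - η p.2) ^ 2),
            ((η p.1 - η p.2) ^ 2 - 1) * r p.1 p.2 := by
    rw [hS]
    exact (Finset.sum_filter_add_sum_filter_not P _ _).symm
  have hrest : ∑ p ∈ P.filter (fun p => ¬ 1 < (η p.1 - η p.2) ^ 2),
      ((η p.1 - η p.2) ^ 2 - 1) * r p.1 p.2 ≤ 0 := by
    apply Finset.sum_nonpos
    intro p hp
    simp only [Finset.mem_filter, hP, Finset.mem_univ, true_and, not_lt] at hp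
    exact mul_nonpos_of_nonpos_of_nonneg (by linarith [hp.2]) (hr _ _ hp.1)
  have hSbound : ∑ p ∈ S, ((η p.1 - η p.2) ^ 2 - 1) * r p.1 p.2 ≤ M := by
    calc ∑ p ∈ S, ((η p.1 - η p.2) ^ 2 - 1) * r p.1 p.2
        ≤ ∑ p ∈ S, ((η p.1 - η p.2) ^ 2 - 1) * M := by
          apply Finset.sum_le_sum
          intro p hp
          obtain ⟨hplt, hpc⟩ := hSP p hp
          exact mul_le_mul_of_nonneg_left (hle _ _ hplt) (by linarith)
      _ = (∑ p ∈ S, ((η p.1 - η p.2) ^ 2 - 1)) * M := by rw [Finset.sum_mul]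
      _ ≤ 1 * M := mul_le_mul_of_nonneg_right key hM0
      _ = M := one_mul M
  linarith [hPsplit, hrest, hSbound]
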